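/- (Reduction to the dispersionless KP equation.) Let u : ℝ³ → ℝ be a smooth function of (y¹,y³,y⁴) and define a(y¹,y²,y³,y⁴) = −u_{y¹} + (y²)²/2 and b(y¹,y²,y³,y⁴) = y² u_{y¹} + u_{y³} − (y²)³/3. Then the equation a_{y⁴} − b_{y³} = a_{y¹} b_{y²} − a_{y²} b_{y¹} holds at a point (y¹,y²,y³,y⁴) if and only if u satisfies the dispersionless KP equation u_{y⁴y¹} + u_{y³y³} = u_{y¹} u_{y¹y¹} at (y¹,y³,y⁴); in particular, the terms involving y² cancel identically. -/

import Mathlib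

noncomputable section

/-- Partial derivative of `f : ℝⁿ → ℝ` in the `i`-th coordinate direction. -/
def pd {n : ℕ} (i : Fin n) (f : (Fin n → ℝ) → ℝ) : (Fin n → ℝ) → ℝ :=
  fun p => fderiv ℝ f p (Pi.single i 1)

/-- The restriction map `(y¹,y²,y³,y⁴) ↦ (y¹,y³,y⁴)`. -/
def proj134 (w : Fin 4 → ℝ) : Fin 3 → ℝ := fun j => w (![0, 2, 3] j)

namespace Stmt17Aux

def P : (Fin 4 → ℝ) →L[ℝ] (Fin 3 → ℝ) :=
  ContinuousLinearMap.pi fun j => ContinuousLinearMap.proj (![0, 2, 3] j)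

lemma P0 : P (Pi.single (0 : Fin 4) (1:ℝ)) = Pi.single (0 : Fin 3) 1 := by
  funext j; fin_cases j <;> simp [P, Pi.single_apply]

lemma P1 : P (Pi.single (1 : Fin 4) (1:ℝ)) = 0 := by
  funext j; fin_cases j <;> simp [P, Pi.single_apply]

lemma P2 : P (Pi.single (2 : Fin 4) (1:ℝ)) = Pi.single (1 : Fin 3) 1 := by
  funext j; fin_cases j <;> simp [P, Pi.single_apply]

lemma P3 : P (Pi.single (3 : Fin 4) (1:ℝ)) = Pi.single (2 : Fin 3) 1 := by
  funext j; fin_cases j <;> simp [P, Pi.single_apply]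

lemma two_le_top : (2 : WithTop ℕ∞) ≤ ((⊤ : ℕ∞) : WithTop ℕ∞) :=
  le_trans (by norm_cast) (WithTop.coe_le_coe.mpr (le_top : (2:ℕ∞) ≤ ⊤))

lemma pd_contDiff {n : ℕ} (i : Fin n) {f : (Fin n → ℝ) → ℝ}
    (hf : ContDiff ℝ (⊤ : ℕ∞) f) : ContDiff ℝ (⊤ : ℕ∞) (pd i f) := by
  have h1 : ContDiff ℝ (⊤ : ℕ∞) (fun p => fderiv ℝ f p) := hf.fderiv_right (by simp)
  exact (ContinuousLinearMap.apply ℝ ℝ ((Pi.single i 1 : Fin n → ℝ))).contDiff.comp h1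

lemma pd_pd {f : (Fin 3 → ℝ) → ℝ} (hf : ContDiff ℝ (⊤ : ℕ∞) f) (i j : Fin 3)
    (p : Fin 3 → ℝ) :
    pd i (pd j f) p = fderiv ℝ (fderiv ℝ f) p (Pi.single i 1) (Pi.single j 1) := by
  have hd : DifferentiableAt ℝ (fderiv ℝ f) p :=
    ((hf.fderiv_right (m := (⊤ : ℕ∞)) (by simp)).differentiable (by simp)) p
  have h : pd j f = fun q => (fderiv ℝ f q) ((fun _ : Fin 3 → ℝ => (Pi.single j 1 : Fin 3 → ℝ)) q) := rfl
  rw [pd, h, fderiv_clm_apply hd (differentiableAt_const _)]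
  simp

lemma pd_symm {f : (Fin 3 → ℝ) → ℝ} (hf : ContDiff ℝ (⊤ : ℕ∞) f) (i j : Fin 3)
    (p : Fin 3 → ℝ) : pd i (pd j f) p = pd j (pd i f) p := by
  rw [pd_pd hf, pd_pd hf]
  exact (hf.contDiffAt).isSymmSndFDerivAt (le_trans (by simp) two_le_top) _ _

end Stmt17Aux

open Stmt17Aux in
/-- reduction to the dispersionless KP equation: with
`a = −u_{y¹} + (y²)²/2` and `b = y² u_{y¹} + u_{y³} − (y²)³/3`, the equation
`a_{y⁴} − b_{y³} = a_{y¹} b_{y²} − a_{y²} b_{y¹}` holds at a point `(y¹,y²,y³,y⁴)` iff `u`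
satisfies the dispersionless KP equation `u_{y⁴y¹} + u_{y³y³} = u_{y¹} u_{y¹y¹}` at
`(y¹,y³,y⁴)` (variables of `u` ordered `(y¹,y³,y⁴)`). -/
theorem stmt17 (u : (Fin 3 → ℝ) → ℝ) (hu : ContDiff ℝ (⊤ : ℕ∞) u) :
    ∀ w : Fin 4 → ℝ,
      (pd 3 (fun w' => -(pd 0 u (proj134 w')) + (w' 1) ^ 2 / 2) w -
          pd 2 (fun w' => w' 1 * pd 0 u (proj134 w') + pd 1 u (proj134 w') -
            (w' 1) ^ 3 / 3) w =
        pd 0 (fun w' => -(pd 0 u (proj134 w')) + (w' 1) ^ 2 / 2) w *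
            pd 1 (fun w' => w' 1 * pd 0 u (proj134 w') + pd 1 u (proj134 w') -
              (w' 1) ^ 3 / 3) w -
          pd 1 (fun w' => -(pd 0 u (proj134 w')) + (w' 1) ^ 2 / 2) w *
            pd 0 (fun w' => w' 1 * pd 0 u (proj134 w') + pd 1 u (proj134 w') -
              (w' 1) ^ 3 / 3) w) ↔
      (pd 0 (pd 2 u) (proj134 w) + pd 1 (pd 1 u) (proj134 w) =
        pd 0 u (proj134 w) * pd 0 (pd 0 u) (proj134 w)) := by
  intro w
  have hg0 := pd_contDiff 0 hu
  have hg1 := pd_contDiff 1 hu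
  have hP : HasFDerivAt proj134 P w := P.hasFDerivAt
  have hdg0 : HasFDerivAt (pd 0 u) (fderiv ℝ (pd 0 u) (proj134 w)) (proj134 w) :=
    (hg0.differentiable (by simp) (proj134 w)).hasFDerivAt
  have hdg1 : HasFDerivAt (pd 1 u) (fderiv ℝ (pd 1 u) (proj134 w)) (proj134 w) :=
    (hg1.differentiable (by simp) (proj134 w)).hasFDerivAt
  have h0 : HasFDerivAt (fun w' => pd 0 u (proj134 w'))
      ((fderiv ℝ (pd 0 u) (proj134 w)).comp P) w := hdg0.comp w hP
  have h1 : HasFDerivAt (fun w' => pd 1 u (proj134 w'))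
      ((fderiv ℝ (pd 1 u) (proj134 w)).comp P) w := hdg1.comp w hP
  have hy : HasFDerivAt (fun w' : Fin 4 → ℝ => w' 1)
      (ContinuousLinearMap.proj (R := ℝ) (φ := fun _ : Fin 4 => ℝ) 1) w :=
    (ContinuousLinearMap.proj (R := ℝ) (φ := fun _ : Fin 4 => ℝ) 1).hasFDerivAt
  have hsq : HasFDerivAt (fun w' : Fin 4 → ℝ => (w' 1) ^ 2 / 2)
      ((((2:ℕ) * (w 1) ^ 1) / 2) • (ContinuousLinearMap.proj (R := ℝ) (φ := fun _ : Fin 4 => ℝ) 1)) w :=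
    by have := ((hasDerivAt_pow 2 (w 1)).div_const 2).comp_hasFDerivAt w hy; exact this
  have hcb : HasFDerivAt (fun w' : Fin 4 → ℝ => (w' 1) ^ 3 / 3)
      ((((3:ℕ) * (w 1) ^ 2) / 3) • (ContinuousLinearMap.proj (R := ℝ) (φ := fun _ : Fin 4 => ℝ) 1)) w :=
    by have := ((hasDerivAt_pow 3 (w 1)).div_const 3).comp_hasFDerivAt w hy; exact this
  have ha : HasFDerivAt (fun w' => -(pd 0 u (proj134 w')) + (w' 1) ^ 2 / 2)
      (-((fderiv ℝ (pd 0 u) (proj134 w)).comp P) +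
        (((2:ℕ) * (w 1) ^ 1) / 2) • (ContinuousLinearMap.proj (R := ℝ) (φ := fun _ : Fin 4 => ℝ) 1)) w :=
    (h0.neg).add hsq
  have hb : HasFDerivAt (fun w' => w' 1 * pd 0 u (proj134 w') + pd 1 u (proj134 w') - (w' 1) ^ 3 / 3)
      (((w 1) • ((fderiv ℝ (pd 0 u) (proj134 w)).comp P) +
          (pd 0 u (proj134 w)) • (ContinuousLinearMap.proj (R := ℝ) (φ := fun _ : Fin 4 => ℝ) 1) +
          (fderiv ℝ (pd 1 u) (proj134 w)).comp P) -
        (((3:ℕ) * (w 1) ^ 2) / 3) • (ContinuousLinearMap.proj (R := ℝ) (φ := fun _ : Fin 4 => ℝ) 1)) w :=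
    ((hy.mul h0).add h1).sub hcb
  have Ea : ∀ i : Fin 4, pd i (fun w' => -(pd 0 u (proj134 w')) + (w' 1) ^ 2 / 2) w
      = (-((fderiv ℝ (pd 0 u) (proj134 w)).comp P) +
          (((2:ℕ) * (w 1) ^ 1) / 2) • (ContinuousLinearMap.proj (R := ℝ) (φ := fun _ : Fin 4 => ℝ) 1)) (Pi.single i 1) := by
    intro i
    show fderiv ℝ (fun w' => -(pd 0 u (proj134 w')) + (w' 1) ^ 2 / 2) w (Pi.single i 1) = _
    rw [ha.fderiv]
  have Eb : ∀ i : Fin 4, pd i (fun w' => w' 1 * pd 0 u (proj134 w') + pd 1 u (proj134 w') - (w' 1) ^ 3 / 3) w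
      = (((w 1) • ((fderiv ℝ (pd 0 u) (proj134 w)).comp P) +
          (pd 0 u (proj134 w)) • (ContinuousLinearMap.proj (R := ℝ) (φ := fun _ : Fin 4 => ℝ) 1) +
          (fderiv ℝ (pd 1 u) (proj134 w)).comp P) -
        (((3:ℕ) * (w 1) ^ 2) / 3) • (ContinuousLinearMap.proj (R := ℝ) (φ := fun _ : Fin 4 => ℝ) 1)) (Pi.single i 1) := by
    intro i
    show fderiv ℝ (fun w' => w' 1 * pd 0 u (proj134 w') + pd 1 u (proj134 w') - (w' 1) ^ 3 / 3) w (Pi.single i 1) = _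
    rw [hb.fderiv]
  rw [Ea 3, Ea 0, Ea 1, Eb 2, Eb 1, Eb 0]
  simp only [ContinuousLinearMap.add_apply, ContinuousLinearMap.neg_apply,
    ContinuousLinearMap.sub_apply, ContinuousLinearMap.smul_apply,
    ContinuousLinearMap.comp_apply, P0, P1, P2, P3, ContinuousLinearMap.proj_apply,
    Pi.single_apply, smul_eq_mul, map_zero]
  norm_num
  simp only [show ¬((1:Fin 4) = 3) from by decide, show ¬((1:Fin 4) = 2) from by decide, if_neg, if_false]
  have r1 : (fderiv ℝ (pd 0 u) (proj134 w)) (Pi.single 2 1) = pd 2 (pd 0 u) (proj134 w) := rfl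
  have r2 : (fderiv ℝ (pd 0 u) (proj134 w)) (Pi.single 1 1) = pd 1 (pd 0 u) (proj134 w) := rfl
  have r3 : (fderiv ℝ (pd 1 u) (proj134 w)) (Pi.single 1 1) = pd 1 (pd 1 u) (proj134 w) := rfl
  have r4 : (fderiv ℝ (pd 0 u) (proj134 w)) (Pi.single 0 1) = pd 0 (pd 0 u) (proj134 w) := rfl
  have r5 : (fderiv ℝ (pd 1 u) (proj134 w)) (Pi.single 0 1) = pd 0 (pd 1 u) (proj134 w) := rfl
  rw [r1, r2, r3, r4, r5, pd_symm hu 2 0, pd_symm hu 0 1]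
  constructor <;> intro h <;> linear_combination -h
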